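/- Kernel of powers of multiplication by the Weyl-denominator factor (the paper's Proposition 'for any α and any n ≥ 0 the kernel of t_α^n is ℂ[[Λ^{1/2}]]_{(α)} · y_α^{(n)}'): let a ∈ G with a ≠ 0 and let n ∈ ℕ. For every f : G → ℂ one has t_a^n f = 0 if and only if there exists an a-finite g : G → ℂ with f = g ⋆_a c_n. -/

import Mathlib

/-- The lattice `ℤ^d`, modeling the lattice `Λ^{1/2}` of half-weights. -/
abbrev Glat (d : ℕ) : Type := Fin d → ℤ

/-- Multiplication by `d_{α,-} = α^{-1/2} - α^{1/2}` on unbounded Laurent series,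
modeled as the operator `(t_a f) x = f (x + a) - f (x - a)`. -/
def ta {d : ℕ} (a : Glat d) (f : Glat d → ℂ) : Glat d → ℂ :=
  fun x => f (x + a) - f (x - a)

/-- The coefficient sequence `c_n` of the series `y_α^{(n)}` in powers of `α^{1/2}`:
for `n ≥ 1`, `c_n (2k+n) = choose (n-1+k) (n-1)` and
`c_n (-(2k+n)) = (-1)^{n+1} * choose (n-1+k) (n-1)` for `k ∈ ℕ`, `0` elsewhere; `c_0 = 0`. -/
def cseq (n : ℕ) (m : ℤ) : ℤ :=
  if n = 0 then 0
  else if (n : ℤ) ≤ m ∧ (m - (n : ℤ)) % 2 = 0 then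
    ((n - 1 + ((m - (n : ℤ)) / 2).toNat).choose (n - 1) : ℤ)
  else if m ≤ -(n : ℤ) ∧ (m + (n : ℤ)) % 2 = 0 then
    (-1) ^ (n + 1) * ((n - 1 + ((-m - (n : ℤ)) / 2).toNat).choose (n - 1) : ℤ)
  else 0

/-- `g : ℤ^d → ℂ` is `a`-finite if along every coset of `ℤ•a` it has finite support. -/
def AFinite {d : ℕ} (a : Glat d) (g : Glat d → ℂ) : Prop :=
  ∀ x : Glat d, {m : ℤ | g (x + m • a) ≠ 0}.Finite

/-- Convolution `(g ⋆_a c) x = Σ_{m ∈ ℤ} g (x - m•a) * c m`; for `a`-finite `g`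
only finitely many terms are nonzero. -/
noncomputable def conv {d : ℕ} (a : Glat d) (g : Glat d → ℂ) (c : ℤ → ℤ) : Glat d → ℂ :=
  fun x => ∑' m : ℤ, g (x - m • a) * (c m : ℂ)

/-! ### Auxiliary lemmas -/

section Aux

set_option linter.unnecessarySeqFocus false

lemma cseq_zero' (m : ℤ) : cseq 0 m = 0 := by simp [cseq]

lemma cseq_pos (n : ℕ) (hn : n ≠ 0) (m : ℤ) (h1 : (n:ℤ) ≤ m) (h2 : (m - (n:ℤ)) % 2 = 0) :
    cseq n m = ((n - 1 + ((m - (n : ℤ)) / 2).toNat).choose (n - 1) : ℤ) := by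
  rw [cseq, if_neg hn, if_pos ⟨h1, h2⟩]

lemma cseq_neg (n : ℕ) (hn : n ≠ 0) (m : ℤ) (h1 : m ≤ -(n:ℤ)) (h2 : (m + (n:ℤ)) % 2 = 0) :
    cseq n m = (-1) ^ (n + 1) * ((n - 1 + ((-m - (n : ℤ)) / 2).toNat).choose (n - 1) : ℤ) := by
  have hn' : (1:ℤ) ≤ (n:ℤ) := by exact_mod_cast Nat.one_le_iff_ne_zero.2 hn
  rw [cseq, if_neg hn, if_neg (by omega), if_pos ⟨h1, h2⟩]

lemma cseq_mid (n : ℕ) (m : ℤ) (h1 : ¬((n:ℤ) ≤ m ∧ (m - (n:ℤ)) % 2 = 0))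
    (h2 : ¬(m ≤ -(n:ℤ) ∧ (m + (n:ℤ)) % 2 = 0)) : cseq n m = 0 := by
  rw [cseq]; split_ifs <;> tauto

lemma pascal (p k : ℕ) :
    ((p + 1 + (k+1)).choose (p+1) : ℤ) - ((p + 1 + k).choose (p+1) : ℤ)
      = ((p + (k+1)).choose p : ℤ) := by
  have h : (p + 1 + k + 1).choose (p + 1) = (p+1+k).choose p + (p+1+k).choose (p+1) :=
    Nat.choose_succ_succ _ _
  have e1 : p + 1 + (k+1) = p + 1 + k + 1 := by omega
  have e2 : p + (k+1) = p + 1 + k := by omega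
  rw [e1, e2, h]; push_cast; ring

lemma tau_cseq (n : ℕ) (m : ℤ) :
    cseq (n+1) (m+1) - cseq (n+1) (m-1) = cseq n m := by
  have hN : n + 1 ≠ 0 := by omega
  by_cases hpar : (m - (n:ℤ)) % 2 = 0
  · by_cases hA : (n:ℤ) + 2 ≤ m
    · -- far right
      obtain ⟨k, hk⟩ : ∃ k : ℕ, m - (n:ℤ) = 2*((k:ℤ)+1) := ⟨((m - n)/2 - 1).toNat, by omega⟩
      rw [cseq_pos (n+1) hN (m+1) (by push_cast; try omega) (by push_cast; try omega),
          cseq_pos (n+1) hN (m-1) (by push_cast; try omega) (by push_cast; try omega)]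
      have e1 : ((m + 1 - ((n+1:ℕ):ℤ)) / 2).toNat = k + 1 := by push_cast; try omega
      have e2 : ((m - 1 - ((n+1:ℕ):ℤ)) / 2).toNat = k := by push_cast; try omega
      rw [e1, e2]
      simp only [Nat.add_sub_cancel]
      rcases n with _ | p
      · rw [cseq_zero']; simp
      · rw [cseq_pos (p+1) (by omega) m (by omega) hpar]
        have e3 : ((m - ((p+1:ℕ):ℤ)) / 2).toNat = k + 1 := by push_cast at hk ⊢; omega
        rw [e3]
        simp only [Nat.add_sub_cancel]
        exact pascal p k
    · by_cases hB : m = (n:ℤ)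
      · subst hB
        rw [cseq_pos (n+1) hN _ (by push_cast; try omega) (by push_cast; try omega)]
        have e1 : (((n:ℤ) + 1 - ((n+1:ℕ):ℤ)) / 2).toNat = 0 := by push_cast; try omega
        rw [e1]
        rcases n with _ | p
        · rw [cseq_zero', cseq_neg 1 (by omega) _ (by push_cast; try omega)
            (by push_cast; try omega)]
          norm_num
        · rw [cseq_mid (p+2) _ (by push_cast; try omega) (by push_cast; try omega),
              cseq_pos (p+1) (by omega) _ (by omega) (by omega)]
          have e2 : ((((p+1:ℕ):ℤ) - ((p+1:ℕ):ℤ)) / 2).toNat = 0 := by push_cast; try omega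
          rw [e2]
          simp
      · by_cases hC : -(n:ℤ) < m ∧ m < (n:ℤ)
        · rw [cseq_mid (n+1) (m+1) (by push_cast; try omega) (by push_cast; try omega),
              cseq_mid (n+1) (m-1) (by push_cast; try omega) (by push_cast; try omega),
              cseq_mid n m (by omega) (by omega)]
          ring
        · by_cases hD : m = -(n:ℤ)
          · rcases n with _ | p
            · omega
            · subst hD
              rw [cseq_mid (p+2) _ (by push_cast; try omega) (by push_cast; try omega),
                  cseq_neg (p+2) (by omega) _ (by push_cast; try omega)
                    (by push_cast; try omega),
                  cseq_neg (p+1) (by omega) _ (by omega) (by omega)]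
              have e1 : ((-(-((p+1:ℕ):ℤ) - 1) - ((p+2:ℕ):ℤ)) / 2).toNat = 0 := by
                push_cast; try omega
              have e2 : ((-(-((p+1:ℕ):ℤ)) - ((p+1:ℕ):ℤ)) / 2).toNat = 0 := by
                push_cast; try omega
              rw [e1, e2]
              simp only [Nat.add_sub_cancel, Nat.add_zero, Nat.choose_self, Nat.cast_one]
              ring
          · -- far left : m ≤ -n - 2
            have hE : m ≤ -(n:ℤ) - 2 := by omega
            obtain ⟨k, hk⟩ : ∃ k : ℕ, -m - (n:ℤ) = 2*((k:ℤ)+1) := ⟨((-m - n)/2 - 1).toNat, by omega⟩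
            rw [cseq_neg (n+1) hN (m+1) (by push_cast; try omega) (by push_cast; try omega),
                cseq_neg (n+1) hN (m-1) (by push_cast; try omega) (by push_cast; try omega)]
            have e1 : ((-(m+1) - ((n+1:ℕ):ℤ)) / 2).toNat = k := by push_cast; try omega
            have e2 : ((-(m-1) - ((n+1:ℕ):ℤ)) / 2).toNat = k + 1 := by push_cast; try omega
            rw [e1, e2]
            simp only [Nat.add_sub_cancel]
            rcases n with _ | p
            · rw [cseq_zero']; simp
            · rw [cseq_neg (p+1) (by omega) m (by omega) (by omega)]
              have e3 : ((-m - ((p+1:ℕ):ℤ)) / 2).toNat = k + 1 := by push_cast at hk ⊢; omega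
              rw [e3]
              simp only [Nat.add_sub_cancel]
              linear_combination ((-1:ℤ)^(p+1+1)) * pascal p k
  · -- parity fails
    rw [cseq_mid (n+1) (m+1) (by push_cast; try omega) (by push_cast; try omega),
        cseq_mid (n+1) (m-1) (by push_cast; try omega) (by push_cast; try omega)]
    rcases n with _ | p
    · rw [cseq_zero']; ring
    · rw [cseq_mid (p+1) m (by omega) (by omega)]; ring

/-- The shift-difference operator on coefficient sequences. -/
def tauZ (c : ℤ → ℤ) : ℤ → ℤ := fun m => c (m + 1) - c (m - 1)

lemma tauZ_cseq_succ (n : ℕ) : tauZ (cseq (n+1)) = cseq n :=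
  funext fun m => tau_cseq n m

lemma tauZ_iter (n j : ℕ) : tauZ^[n] (cseq (n + j)) = cseq j := by
  induction n with
  | zero => simp
  | succ n ih =>
    rw [Function.iterate_succ_apply, show n + 1 + j = (n + j) + 1 from by omega,
      tauZ_cseq_succ, ih]

lemma summable_aux {d : ℕ} {a : Glat d} {g : Glat d → ℂ} (hg : AFinite a g)
    (x : Glat d) (c : ℤ → ℂ) : Summable (fun m : ℤ => g (x - m • a) * c m) := by
  have hfin : {m : ℤ | g (x - m • a) ≠ 0}.Finite := by
    have h2 : {m : ℤ | g (x - m • a) ≠ 0}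
        = (fun m : ℤ => -m) ⁻¹' {m : ℤ | g (x + m • a) ≠ 0} := by
      ext m
      simp only [Set.mem_setOf_eq, Set.mem_preimage]
      rw [sub_eq_add_neg, ← neg_smul]
    rw [h2]
    exact (hg x).preimage neg_injective.injOn
  apply summable_of_ne_finset_zero (s := hfin.toFinset)
  intro b hb
  simp only [Set.Finite.mem_toFinset, Set.mem_setOf_eq, not_not] at hb
  rw [hb, zero_mul]

lemma conv_shift_up {d : ℕ} {a : Glat d} (g : Glat d → ℂ) (c : ℤ → ℤ) (x : Glat d) :
    ∑' m : ℤ, g (x + a - m • a) * (c m : ℂ) = ∑' m : ℤ, g (x - m • a) * (c (m + 1) : ℂ) := by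
  rw [← (Equiv.addRight (1:ℤ)).tsum_eq (fun m => g (x + a - m • a) * (c m : ℂ))]
  apply tsum_congr
  intro m
  simp only [Equiv.coe_addRight]
  congr 2
  funext j
  simp only [Pi.add_apply, Pi.sub_apply, Pi.smul_apply, smul_eq_mul]
  ring

lemma conv_shift_down {d : ℕ} {a : Glat d} (g : Glat d → ℂ) (c : ℤ → ℤ) (x : Glat d) :
    ∑' m : ℤ, g (x - a - m • a) * (c m : ℂ) = ∑' m : ℤ, g (x - m • a) * (c (m - 1) : ℂ) := by
  rw [← (Equiv.addRight (-1:ℤ)).tsum_eq (fun m => g (x - a - m • a) * (c m : ℂ))]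
  apply tsum_congr
  intro m
  simp only [Equiv.coe_addRight]
  rw [show m + (-1) = m - 1 by ring]
  congr 2
  funext j
  simp only [Pi.add_apply, Pi.sub_apply, Pi.smul_apply, smul_eq_mul]
  ring

lemma ta_conv {d : ℕ} {a : Glat d} {g : Glat d → ℂ} (hg : AFinite a g) (c : ℤ → ℤ) :
    ta a (conv a g c) = conv a g (tauZ c) := by
  funext x
  simp only [ta, conv, tauZ]
  rw [conv_shift_up g c x, conv_shift_down g c x,
    ← Summable.tsum_sub (summable_aux hg x _) (summable_aux hg x _)]
  apply tsum_congr
  intro m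
  push_cast
  ring

lemma conv_tauZ {d : ℕ} {a : Glat d} {g : Glat d → ℂ} (hg : AFinite a g) (c : ℤ → ℤ) :
    conv a g (tauZ c) = conv a (ta a g) c := by
  funext x
  simp only [conv, tauZ, ta]
  rw [show (∑' m : ℤ, g (x - m • a) * ((c (m+1) - c (m-1) : ℤ) : ℂ))
      = ∑' m : ℤ, (g (x - m • a) * (c (m+1) : ℂ) - g (x - m • a) * (c (m-1) : ℂ)) from
    tsum_congr (fun m => by push_cast; ring)]
  rw [Summable.tsum_sub (summable_aux hg x _) (summable_aux hg x _),
    ← conv_shift_up g c x, ← conv_shift_down g c x,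
    ← Summable.tsum_sub (summable_aux hg (x + a) _) (summable_aux hg (x - a) _)]
  apply tsum_congr
  intro m
  have e1 : x + a - m • a = x - m • a + a := by
    funext j; simp only [Pi.add_apply, Pi.sub_apply, Pi.smul_apply, smul_eq_mul]; ring
  have e2 : x - a - m • a = x - m • a - a := by
    funext j; simp only [Pi.add_apply, Pi.sub_apply, Pi.smul_apply, smul_eq_mul]; ring
  rw [e1, e2]
  ring

lemma afinite_zero {d : ℕ} (a : Glat d) : AFinite a (fun _ => (0:ℂ)) := by
  intro x
  simp

lemma afinite_add {d : ℕ} {a : Glat d} {g1 g2 : Glat d → ℂ}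
    (h1 : AFinite a g1) (h2 : AFinite a g2) : AFinite a (fun y => g1 y + g2 y) := by
  intro x
  apply Set.Finite.subset ((h1 x).union (h2 x))
  intro m hm
  simp only [Set.mem_setOf_eq, Set.mem_union] at hm ⊢
  by_contra hc
  push_neg at hc
  exact hm (by rw [hc.1, hc.2, add_zero])

lemma afinite_ta {d : ℕ} {a : Glat d} {g : Glat d → ℂ} (hg : AFinite a g) :
    AFinite a (ta a g) := by
  intro x
  have h1 : {m : ℤ | g (x + m • a + a) ≠ 0}.Finite := by
    apply Set.Finite.subset (hg (x + a))
    intro m hm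
    simp only [Set.mem_setOf_eq] at hm ⊢
    rwa [add_right_comm] at hm
  have h2 : {m : ℤ | g (x + m • a - a) ≠ 0}.Finite := by
    apply Set.Finite.subset (hg (x - a))
    intro m hm
    simp only [Set.mem_setOf_eq] at hm ⊢
    rwa [show x + m • a - a = x - a + m • a from by
      funext j; simp only [Pi.add_apply, Pi.sub_apply, Pi.smul_apply, smul_eq_mul]; ring] at hm
  apply Set.Finite.subset (h1.union h2)
  intro m hm
  simp only [Set.mem_setOf_eq, ta, Set.mem_union] at hm ⊢
  by_contra hc
  push_neg at hc
  exact hm (by rw [hc.1, hc.2, sub_zero])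

lemma afinite_ta_iter {d : ℕ} {a : Glat d} {g : Glat d → ℂ} (hg : AFinite a g) (k : ℕ) :
    AFinite a ((ta a)^[k] g) := by
  induction k with
  | zero => exact hg
  | succ k ih => rw [Function.iterate_succ_apply']; exact afinite_ta ih

lemma ta_conv_iter {d : ℕ} {a : Glat d} {g : Glat d → ℂ} (hg : AFinite a g) (k : ℕ)
    (c : ℤ → ℤ) : (ta a)^[k] (conv a g c) = conv a g (tauZ^[k] c) := by
  induction k generalizing c with
  | zero => rfl
  | succ k ih =>
    rw [Function.iterate_succ_apply, ta_conv hg, ih, ← Function.iterate_succ_apply]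

lemma conv_tauZ_iter {d : ℕ} {a : Glat d} {g : Glat d → ℂ} (hg : AFinite a g) (k : ℕ)
    (c : ℤ → ℤ) : conv a g (tauZ^[k] c) = conv a ((ta a)^[k] g) c := by
  induction k generalizing c with
  | zero => rfl
  | succ k ih =>
    rw [Function.iterate_succ_apply, ih, conv_tauZ (afinite_ta_iter hg k),
      ← Function.iterate_succ_apply' (ta a) k g]

lemma conv_add' {d : ℕ} {a : Glat d} {g1 g2 : Glat d → ℂ}
    (h1 : AFinite a g1) (h2 : AFinite a g2) (c : ℤ → ℤ) (x : Glat d) :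
    conv a (fun y => g1 y + g2 y) c x = conv a g1 c x + conv a g2 c x := by
  simp only [conv]
  rw [← Summable.tsum_add (summable_aux h1 x _) (summable_aux h2 x _)]
  exact tsum_congr fun m => by ring

lemma ta_sub {d : ℕ} (a : Glat d) (f h : Glat d → ℂ) :
    ta a (fun x => f x - h x) = fun x => ta a f x - ta a h x := by
  funext x
  simp only [ta]
  ring

lemma cseq_one_odd (m : ℤ) (hm : m % 2 ≠ 0) : cseq 1 m = 1 := by
  rw [cseq]
  split_ifs with h0 h1 h2 <;> simp_all <;> omega

lemma cseq_one_even (m : ℤ) (hm : m % 2 = 0) : cseq 1 m = 0 := by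
  rw [cseq]
  split_ifs with h0 h1 h2 <;> first | rfl | omega

lemma window_unique {t s m m₀ : ℤ} (h1 : 0 ≤ s - m*t) (h2 : s - m*t < 2*|t|)
    (h3 : 0 ≤ s - m₀*t) (h4 : s - m₀*t < 2*|t|) (hpar : (m - m₀) % 2 = 0) : m = m₀ := by
  by_contra hne
  have hd : 2 ≤ m - m₀ ∨ 2 ≤ m₀ - m := by omega
  have e : (m - m₀)*t = (s - m₀*t) - (s - m*t) := by ring
  have e' : (m₀ - m)*t = (s - m*t) - (s - m₀*t) := by ring
  have ht : t ≠ 0 := by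
    rintro rfl
    simp at h2
    omega
  rcases ht.lt_or_gt with htn | htp
  · rw [abs_of_neg htn] at h2 h4
    rcases hd with h | h
    · have hm := mul_le_mul_of_nonpos_right h htn.le
      linarith
    · have hm := mul_le_mul_of_nonpos_right h htn.le
      linarith
  · rw [abs_of_pos htp] at h2 h4
    rcases hd with h | h
    · have hm := mul_le_mul_of_nonneg_right h htp.le
      linarith
    · have hm := mul_le_mul_of_nonneg_right h htp.le
      linarith

lemma ker_ta {d : ℕ} (a : Glat d) (ha : a ≠ 0) (f : Glat d → ℂ) (hf : ta a f = 0) :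
    ∃ g : Glat d → ℂ, AFinite a g ∧ f = conv a g (cseq 1) := by
  obtain ⟨i, hi⟩ : ∃ i, a i ≠ 0 := by
    by_contra h
    push_neg at h
    exact ha (funext h)
  have hstep : ∀ x, f (x + a + a) = f x := by
    intro x
    have h1 := congrFun hf (x + a)
    simp only [ta, Pi.zero_apply, sub_eq_zero, add_sub_cancel_right] at h1
    exact h1
  have hper : ∀ (k : ℤ) (x : Glat d), f (x + (2*k) • a) = f x := by
    intro k
    induction k using Int.induction_on with
    | zero => intro x; simp
    | succ k ih =>
      intro x
      have e : x + (2*((k:ℤ)+1)) • a = (x + (2*(k:ℤ)) • a) + a + a := by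
        funext j; simp only [Pi.add_apply, Pi.smul_apply, smul_eq_mul]; ring
      rw [e, hstep, ih]
    | pred k ih =>
      intro x
      have e : (x + (2*(-(k:ℤ)-1)) • a) + a + a = x + (2*(-(k:ℤ))) • a := by
        funext j; simp only [Pi.add_apply, Pi.smul_apply, smul_eq_mul]; ring
      have h2 := hstep (x + (2*(-(k:ℤ)-1)) • a)
      rw [e] at h2
      rw [← h2, ih]
  set t := a i with hti
  refine ⟨fun y => if 0 ≤ y i ∧ y i < 2*|t| then f (y + a) else 0, ?_, ?_⟩
  · -- AFinite
    intro x
    have hinj : Function.Injective (fun m : ℤ => x i + m * t) := by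
      intro m n h
      simp only at h
      have : m * t = n * t := by linarith
      exact mul_right_cancel₀ hi this
    apply Set.Finite.subset (((Set.finite_Ico 0 (2*|t|)).preimage hinj.injOn))
    intro m hm
    simp only [Set.mem_setOf_eq] at hm
    simp only [Set.mem_preimage, Set.mem_Ico]
    by_contra hc
    apply hm
    rw [if_neg]
    intro hc2
    apply hc
    have e : (x + m • a) i = x i + m * t := by
      simp only [Pi.add_apply, Pi.smul_apply, smul_eq_mul, hti]
    rw [e] at hc2
    exact hc2
  · -- conv equality
    funext x
    set q : ℤ := (x i - t) / (2*t) with hq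
    set m₀ : ℤ := 2*q + 1 with hm₀
    have h2t : (2*t) ≠ 0 := mul_ne_zero two_ne_zero hi
    have hwin : 0 ≤ x i - m₀ * t ∧ x i - m₀ * t < 2*|t| := by
      have h0 := Int.mul_ediv_add_emod (x i - t) (2*t)
      have hr1 : 0 ≤ (x i - t) % (2*t) := Int.emod_nonneg _ h2t
      have hr2 : (x i - t) % (2*t) < |2*t| := Int.emod_lt_abs _ h2t
      have habs : |2*t| = 2*|t| := by rw [abs_mul]; norm_num
      have key : x i - m₀ * t = (x i - t) % (2*t) := by
        rw [hm₀]
        linear_combination -h0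
      rw [key]
      exact ⟨hr1, habs ▸ hr2⟩
    have harg : ∀ m : ℤ, (x - m • a) i = x i - m * t := by
      intro m
      simp only [Pi.sub_apply, Pi.smul_apply, smul_eq_mul, hti]
    have hconv : conv a (fun y => if 0 ≤ y i ∧ y i < 2*|t| then f (y + a) else 0) (cseq 1) x
        = ∑' m : ℤ, (if 0 ≤ (x - m • a) i ∧ (x - m • a) i < 2*|t| then f (x - m • a + a) else 0)
            * ((cseq 1 m : ℤ) : ℂ) := rfl
    rw [hconv, tsum_eq_single m₀ ?_]
    · rw [harg m₀, if_pos hwin, cseq_one_odd m₀ (by omega)]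
      have e : x - m₀ • a + a = x + (2*(-q)) • a := by
        funext j
        simp only [hm₀, Pi.add_apply, Pi.sub_apply, Pi.smul_apply, smul_eq_mul]
        ring
      rw [e, hper (-q) x]
      norm_num
    · intro m hm
      by_cases hme : m % 2 = 0
      · rw [cseq_one_even m hme]
        norm_num
      · rw [harg m, if_neg, zero_mul]
        rintro ⟨w1, w2⟩
        exact hm (window_unique w1 w2 hwin.1 hwin.2 (by omega))

end Aux

/-- The kernel of `t_a^n` is `ℂ[[Λ^{1/2}]]_{(α)} · y_α^{(n)}`: `t_a^n f = 0` iff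
`f = g ⋆_a c_n` for some `a`-finite `g`. -/
theorem kernel_of_ta_pow {d : ℕ} (hd : 1 ≤ d) (a : Glat d) (ha : a ≠ 0) (n : ℕ)
    (f : Glat d → ℂ) :
    (ta a)^[n] f = 0 ↔ ∃ g : Glat d → ℂ, AFinite a g ∧ f = conv a g (cseq n) := by
  constructor
  · intro h
    induction n generalizing f with
    | zero =>
      refine ⟨fun _ => 0, afinite_zero a, ?_⟩
      simp only [Function.iterate_zero_apply] at h
      rw [h]
      funext x
      simp [conv, cseq_zero']
    | succ n ih =>
      rw [Function.iterate_succ_apply] at h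
      obtain ⟨g', hg', hgf⟩ := ih (ta a f) h
      have hF : ta a (fun x => f x - conv a g' (cseq (n+1)) x) = 0 := by
        have h1 : ta a (fun x => f x - conv a g' (cseq (n+1)) x)
            = fun x => ta a f x - conv a g' (cseq n) x := by
          rw [ta_sub, ta_conv hg', tauZ_cseq_succ]
        rw [h1, hgf]
        funext x
        simp
      obtain ⟨g'', hg'', hgF⟩ := ker_ta a ha _ hF
      refine ⟨fun y => g' y + (ta a)^[n] g'' y,
        afinite_add hg' (afinite_ta_iter hg'' n), ?_⟩
      have h2 : conv a g'' (cseq 1) = conv a ((ta a)^[n] g'') (cseq (n+1)) := by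
        rw [← tauZ_iter n 1, conv_tauZ_iter hg'' n]
      funext x
      have h3 := congrFun hgF x
      rw [conv_add' hg' (afinite_ta_iter hg'' n) _ x, ← congrFun h2 x]
      linear_combination h3
  · rintro ⟨g, hg, rfl⟩
    rw [ta_conv_iter hg n (cseq n)]
    have h0 : tauZ^[n] (cseq n) = cseq 0 := by
      have := tauZ_iter n 0
      rwa [Nat.add_zero] at this
    rw [h0]
    funext x
    simp [conv, cseq_zero']
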